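/- Let Γ be a w-potential game with potential P satisfying the regularity assumptions, and let {s^k}_{k≥0} be a best-response sequence. Then for every integer K ≥ 1 there exists k ∈ {1,…,K} such that s^k is an ε_K-Nash equilibrium with ε_K = L² (P* − P(s^0)) / (δ α_min K), where α_min = min_{i∈[m]} α_i, δ = min_{i∈[m]} α_i/w_i, and P* is the maximum value of P over S. -/

import Mathlib

open Finset Filter Set Topology

section Helpers
variable {E : Type*} [NormedAddCommGroup E] [InnerProductSpace ℝ E] [CompleteSpace E]

lemma dir_deriv {f : E → ℝ} {g y : E} (hf : HasGradientAt f g y) (v : E) :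
    HasDerivAt (fun t : ℝ => f (y + t • v)) (inner ℝ g v : ℝ) 0 := by
  have hc : HasDerivAt (fun t : ℝ => y + t • v) v 0 := by
    simpa using ((hasDerivAt_id (0:ℝ)).smul_const v).const_add y
  have hF : HasFDerivAt f (InnerProductSpace.toDual ℝ E g) (y + (0:ℝ) • v) := by
    simpa using hf.hasFDerivAt
  exact (by simpa using hF.comp_hasDerivAt (0:ℝ) hc : HasDerivAt (f ∘ fun t : ℝ => y + t • v) (inner ℝ g v) 0)

lemma deriv_ge_of_slope {φ ψ : ℝ → ℝ} {c : ℝ} (hφ : HasDerivAt φ c 0)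
    (hψ : ContinuousAt ψ 0)
    (h : ∀ t ∈ Set.Ioc (0:ℝ) 1, ψ t * t ≤ φ t - φ 0) : ψ 0 ≤ c := by
  have hs : Tendsto (slope φ 0) (𝓝[>] 0) (𝓝 c) :=
    (hasDerivAt_iff_tendsto_slope.1 hφ).mono_left
      (nhdsWithin_mono _ (fun t ht => ne_of_gt ht))
  have hψt : Tendsto ψ (𝓝[>] (0:ℝ)) (𝓝 (ψ 0)) :=
    hψ.tendsto.mono_left nhdsWithin_le_nhds
  refine le_of_tendsto_of_tendsto hψt hs ?_
  filter_upwards [Ioc_mem_nhdsGT_of_mem (by constructor <;> norm_num : (0:ℝ) ∈ Set.Ico (0:ℝ) 1)]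
    with t ht
  have h0 : (0:ℝ) < t := ht.1
  have := h t ht
  rw [slope_def_field, sub_zero, le_div_iff₀ h0]
  linarith

lemma deriv_le_of_slope {φ ψ : ℝ → ℝ} {c : ℝ} (hφ : HasDerivAt φ c 0)
    (hψ : ContinuousAt ψ 0)
    (h : ∀ t ∈ Set.Ioc (0:ℝ) 1, φ t - φ 0 ≤ ψ t * t) : c ≤ ψ 0 := by
  have hs : Tendsto (slope φ 0) (𝓝[>] 0) (𝓝 c) :=
    (hasDerivAt_iff_tendsto_slope.1 hφ).mono_left
      (nhdsWithin_mono _ (fun t ht => ne_of_gt ht))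
  have hψt : Tendsto ψ (𝓝[>] (0:ℝ)) (𝓝 (ψ 0)) :=
    hψ.tendsto.mono_left nhdsWithin_le_nhds
  refine le_of_tendsto_of_tendsto hs hψt ?_
  filter_upwards [Ioc_mem_nhdsGT_of_mem (by constructor <;> norm_num : (0:ℝ) ∈ Set.Ico (0:ℝ) 1)]
    with t ht
  have h0 : (0:ℝ) < t := ht.1
  have := h t ht
  rw [slope_def_field, sub_zero, div_le_iff₀ h0]
  linarith

lemma inner_grad_le_zero {f : E → ℝ} {g y x : E} {S : Set E}
    (hS : Convex ℝ S) (hy : y ∈ S) (hx : x ∈ S)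
    (hf : HasGradientAt f g y) (hmax : ∀ z ∈ S, f z ≤ f y) :
    (inner ℝ g (x - y) : ℝ) ≤ 0 := by
  have h := deriv_le_of_slope (dir_deriv hf (x - y)) (continuousAt_const (y := (0:ℝ)))
    (fun t ht => by
      have hmem : y + t • (x - y) ∈ S := by
        have := hS hy hx (by linarith [ht.1.le, ht.2] : (0:ℝ) ≤ 1 - t) ht.1.le (by ring)
        convert this using 1
        module
      have h1 : f (y + t • (x - y)) ≤ f y := hmax _ hmem
      have h2 : f (y + (0:ℝ) • (x - y)) = f y := by norm_num
      simp only [h2]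
      linarith)
  simpa using h

lemma strongConcave_grad_bound {f : E → ℝ} {g y x : E} {S : Set E} {a : ℝ}
    (hf : StrongConcaveOn S a f) (hy : y ∈ S) (hx : x ∈ S)
    (hg : HasGradientAt f g y) :
    f x + a / 2 * ‖x - y‖ ^ 2 ≤ f y + (inner ℝ g (x - y) : ℝ) := by
  have h := deriv_ge_of_slope (dir_deriv hg (x - y))
    (ψ := fun t => f x - f y + (1 - t) * (a / 2 * ‖x - y‖ ^ 2))
    (by fun_prop)
    (fun t ht => by
      have key := hf.2 hx hy ht.1.le (by linarith [ht.2] : (0:ℝ) ≤ 1 - t) (by ring)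
      have hpt : t • x + (1 - t) • y = y + t • (x - y) := by module
      have h2 : f (y + (0:ℝ) • (x - y)) = f y := by norm_num
      rw [hpt] at key
      simp only [smul_eq_mul] at key
      simp only [h2]
      have hnorm : ‖x - y‖ ^ 2 = ‖x - y‖ * ‖x - y‖ := sq ‖x - y‖
      nlinarith [key])
  nlinarith [h]

end Helpers

/-- A best-response sequence: at stage `k+1`, players sequentially update,
player `i` best-responding to the already-updated strategies of players `j < i`
and the previous strategies of players `j > i`. -/
def IsBRSeq {m d : ℕ} (S : Fin m → Set (EuclideanSpace ℝ (Fin d)))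
    (Pay : Fin m → (Fin m → EuclideanSpace ℝ (Fin d)) → ℝ)
    (s : ℕ → Fin m → EuclideanSpace ℝ (Fin d)) : Prop :=
  (∀ i, s 0 i ∈ S i) ∧
  ∀ k : ℕ, ∀ i : Fin m,
    s (k + 1) i ∈ S i ∧
    ∀ x ∈ S i,
      Pay i (Function.update (fun j => if (j : ℕ) < (i : ℕ) then s (k + 1) j else s k j) i x) ≤
      Pay i (Function.update (fun j => if (j : ℕ) < (i : ℕ) then s (k + 1) j else s k j) i
        (s (k + 1) i))

set_option maxHeartbeats 1000000 in
theorem potential_game_BR_approximate_NE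
    (m d : ℕ) (hm : 1 ≤ m)
    (S : Fin m → Set (EuclideanSpace ℝ (Fin d)))
    (hSne : ∀ i, (S i).Nonempty) (hScpt : ∀ i, IsCompact (S i))
    (hScvx : ∀ i, Convex ℝ (S i))
    (Pay : Fin m → (Fin m → EuclideanSpace ℝ (Fin d)) → ℝ)
    (α : Fin m → ℝ) (hα : ∀ i, 0 < α i)
    (hconc : ∀ (i : Fin m) (s : Fin m → EuclideanSpace ℝ (Fin d)), (∀ j, s j ∈ S j) →
      StrongConcaveOn (S i) (α i) (fun x => Pay i (Function.update s i x)))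
    (gradP : Fin m → (Fin m → EuclideanSpace ℝ (Fin d)) → EuclideanSpace ℝ (Fin d))
    (hgrad : ∀ (i : Fin m) (s : Fin m → EuclideanSpace ℝ (Fin d)), (∀ j, s j ∈ S j) →
      HasGradientAt (fun x => Pay i (Function.update s i x)) (gradP i s) (s i))
    (L : ℝ) (hL : 0 < L)
    (hLip : ∀ (i : Fin m) (s s' : Fin m → EuclideanSpace ℝ (Fin d)),
      (∀ j, s j ∈ S j) → (∀ j, s' j ∈ S j) →
      ‖gradP i s - gradP i s'‖ ≤ L * Real.sqrt (∑ j, ‖s j - s' j‖ ^ 2))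
    (w : Fin m → ℝ) (hw : ∀ i, 0 < w i)
    (P : (Fin m → EuclideanSpace ℝ (Fin d)) → ℝ)
    (hpot : ∀ (i : Fin m) (s : Fin m → EuclideanSpace ℝ (Fin d)), (∀ j, s j ∈ S j) →
      ∀ x ∈ S i,
      Pay i s - Pay i (Function.update s i x) = w i * (P s - P (Function.update s i x)))
    (αmin : ℝ) (hαmin : IsLeast (Set.range α) αmin)
    (δ : ℝ) (hδ : IsLeast (Set.range fun i => α i / w i) δ)
    (Pstar : ℝ) (hPstar : IsGreatest (P '' {s | ∀ j, s j ∈ S j}) Pstar)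
    (s : ℕ → Fin m → EuclideanSpace ℝ (Fin d)) (hs : IsBRSeq S Pay s) :
    ∀ K : ℕ, 1 ≤ K → ∃ k : ℕ, 1 ≤ k ∧ k ≤ K ∧
      ∀ i : Fin m, ∀ x ∈ S i,
        Pay i (Function.update (s k) i x) -
          L ^ 2 * (Pstar - P (s 0)) / (δ * αmin * K) ≤ Pay i (s k) := by
  obtain ⟨h0, hBR⟩ := hs
  obtain ⟨i0, hi0⟩ := hαmin.1
  have hαmin0 : 0 < αmin := hi0 ▸ hα i0
  obtain ⟨i1, hi1⟩ := hδ.1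
  have hδ0 : 0 < δ := hi1 ▸ div_pos (hα i1) (hw i1)
  have hfeas : ∀ k j, s k j ∈ S j := by
    intro k
    induction k with
    | zero => exact h0
    | succ k ih => exact fun j => (hBR k j).1
  set q : ℕ → ℕ → Fin m → EuclideanSpace ℝ (Fin d) :=
    fun k n j => if (j:ℕ) < n then s (k+1) j else s k j with hqdef
  have hqfeas : ∀ k n j, q k n j ∈ S j := by
    intro k n j
    by_cases h : (j:ℕ) < n <;> simp [hqdef, h, hfeas]
  have hq0 : ∀ k, q k 0 = s k := fun k => funext fun j => if_neg (Nat.not_lt_zero _)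
  have hqm : ∀ k, q k m = s (k+1) := fun k => funext fun j => if_pos j.isLt
  have hqi : ∀ k (i : Fin m), q k (i:ℕ) i = s k i := fun k i => if_neg (lt_irrefl _)
  have hqsi : ∀ k (i : Fin m), q k ((i:ℕ)+1) i = s (k+1) i :=
    fun k i => if_pos (Nat.lt_succ_self _)
  have hupd : ∀ k (i : Fin m) x,
      Function.update (q k ((i:ℕ)+1)) i x = Function.update (q k (i:ℕ)) i x := by
    intro k i x
    funext j
    rcases eq_or_ne j i with rfl | hne
    · simp
    · have hji : (j:ℕ) ≠ (i:ℕ) := fun h => hne (Fin.ext h)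
      rw [Function.update_of_ne hne, Function.update_of_ne hne]
      show (if (j:ℕ) < (i:ℕ)+1 then s (k+1) j else s k j)
        = (if (j:ℕ) < (i:ℕ) then s (k+1) j else s k j)
      by_cases h : (j:ℕ) < (i:ℕ)
      · rw [if_pos h, if_pos (by omega)]
      · rw [if_neg h, if_neg (by omega)]
  have key : ∀ k (i : Fin m),
      (∀ x ∈ S i, (inner ℝ (gradP i (q k ((i:ℕ)+1))) (x - s (k+1) i) : ℝ) ≤ 0) ∧
      (δ/2 * ‖s (k+1) i - s k i‖^2 ≤ P (q k ((i:ℕ)+1)) - P (q k (i:ℕ))) := by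
    intro k i
    have hgr : HasGradientAt (fun x => Pay i (Function.update (q k (i:ℕ)) i x))
        (gradP i (q k ((i:ℕ)+1))) (s (k+1) i) := by
      have h := hgrad i (q k ((i:ℕ)+1)) (hqfeas k _)
      rw [hqsi k i] at h
      have hfe : (fun x => Pay i (Function.update (q k ((i:ℕ)+1)) i x))
          = (fun x => Pay i (Function.update (q k (i:ℕ)) i x)) :=
        funext fun x => by rw [hupd]
      rwa [hfe] at h
    have hmax : ∀ z ∈ S i, Pay i (Function.update (q k (i:ℕ)) i z)
        ≤ Pay i (Function.update (q k (i:ℕ)) i (s (k+1) i)) := fun z hz => (hBR k i).2 z hz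
    have hconc' := hconc i (q k (i:ℕ)) (hqfeas k _)
    have hbr : s (k+1) i ∈ S i := hfeas (k+1) i
    have hfoc : ∀ x ∈ S i, (inner ℝ (gradP i (q k ((i:ℕ)+1))) (x - s (k+1) i) : ℝ) ≤ 0 :=
      fun x hx => inner_grad_le_zero (hScvx i) hbr hx hgr hmax
    refine ⟨hfoc, ?_⟩
    have himp := strongConcave_grad_bound (x := s k i) (y := s (k+1) i) hconc' hbr
      (hfeas k i) hgr
    have hfoc' := hfoc (s k i) (hfeas k i)
    have e1 : Function.update (q k (i:ℕ)) i (s k i) = q k (i:ℕ) := by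
      rw [← hqi k i]; exact Function.update_eq_self i (q k (i:ℕ))
    have e2 : Function.update (q k (i:ℕ)) i (s (k+1) i) = q k ((i:ℕ)+1) := by
      rw [← hupd, ← hqsi k i]; exact Function.update_eq_self i (q k ((i:ℕ)+1))
    rw [e1, e2] at himp
    have hpot' := hpot i (q k ((i:ℕ)+1)) (hqfeas k _) (s k i) (hfeas k i)
    rw [hupd, e1] at hpot'
    have hδi : δ * w i ≤ α i := by
      have := hδ.2 ⟨i, rfl⟩
      rw [le_div_iff₀ (hw i)] at this
      exact this
    have hn : ‖s (k+1) i - s k i‖^2 = ‖s k i - s (k+1) i‖^2 := by rw [norm_sub_rev]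
    rw [hn]
    nlinarith [himp, hfoc', hpot', hw i, sq_nonneg ‖s k i - s (k+1) i‖, hδi]
  have hD : ∀ k, δ/2 * (∑ j, ‖s (k+1) j - s k j‖^2) ≤ P (s (k+1)) - P (s k) := by
    intro k
    have h1 : ∑ n ∈ Finset.range m, (P (q k (n+1)) - P (q k n)) = P (q k m) - P (q k 0) :=
      Finset.sum_range_sub (fun n => P (q k n)) m
    have h2 : ∑ i : Fin m, (δ/2 * ‖s (k+1) i - s k i‖^2)
        ≤ ∑ i : Fin m, (fun n => P (q k (n+1)) - P (q k n)) (i:ℕ) :=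
      Finset.sum_le_sum (fun i _ => (key k i).2)
    rw [Fin.sum_univ_eq_sum_range (fun n => P (q k (n+1)) - P (q k n)) m, h1, hq0, hqm] at h2
    calc δ/2 * (∑ j, ‖s (k+1) j - s k j‖^2)
        = ∑ i : Fin m, (δ/2 * ‖s (k+1) i - s k i‖^2) := by rw [Finset.mul_sum]
      _ ≤ _ := h2
  have hgap : ∀ k (i : Fin m), ∀ x ∈ S i,
      Pay i (Function.update (s (k+1)) i x)
        ≤ Pay i (s (k+1)) + L^2 * (∑ j, ‖s (k+1) j - s k j‖^2) / (2*αmin) := by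
    intro k i x hx
    have hQ0 : (0:ℝ) ≤ ∑ j, ‖s (k+1) j - s k j‖^2 :=
      Finset.sum_nonneg (fun j _ => sq_nonneg _)
    set Q : ℝ := ∑ j, ‖s (k+1) j - s k j‖^2 with hQ
    set R : ℝ := Real.sqrt Q with hR
    have hR0 : 0 ≤ R := Real.sqrt_nonneg _
    have hR2 : R^2 = Q := Real.sq_sqrt hQ0
    have hgr2 : HasGradientAt (fun z => Pay i (Function.update (s (k+1)) i z))
        (gradP i (s (k+1))) (s (k+1) i) := hgrad i (s (k+1)) (hfeas (k+1))
    have hsc := strongConcave_grad_bound (x := x) (y := s (k+1) i)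
      (hconc i (s (k+1)) (hfeas (k+1))) (hfeas (k+1) i) hx hgr2
    rw [Function.update_eq_self] at hsc
    have hfoc := (key k i).1 x hx
    set g1 := gradP i (s (k+1)) with hg1
    set g2 := gradP i (q k ((i:ℕ)+1)) with hg2
    have hsplit : (inner ℝ g1 (x - s (k+1) i) : ℝ)
        = inner ℝ (g1 - g2) (x - s (k+1) i) + (inner ℝ g2 (x - s (k+1) i) : ℝ) := by
      rw [inner_sub_left]; ring
    have hcs : (inner ℝ (g1 - g2) (x - s (k+1) i) : ℝ) ≤ ‖g1 - g2‖ * ‖x - s (k+1) i‖ :=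
      real_inner_le_norm _ _
    have hlip := hLip i (s (k+1)) (q k ((i:ℕ)+1)) (hfeas (k+1)) (hqfeas k _)
    have hsum_le : ∑ j, ‖s (k+1) j - q k ((i:ℕ)+1) j‖^2 ≤ Q := by
      rw [hQ]
      apply Finset.sum_le_sum
      intro j _
      by_cases h : (j:ℕ) < (i:ℕ)+1
      · simp only [hqdef, if_pos h]
        simp
      · simp [hqdef, h]
    have hnormle : ‖g1 - g2‖ ≤ L * R :=
      hlip.trans (mul_le_mul_of_nonneg_left (Real.sqrt_le_sqrt hsum_le) hL.le)
    have h5 : (inner ℝ (g1 - g2) (x - s (k+1) i) : ℝ) ≤ L * R * ‖x - s (k+1) i‖ :=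
      hcs.trans (mul_le_mul_of_nonneg_right hnormle (norm_nonneg _))
    set r : ℝ := ‖x - s (k+1) i‖ with hr
    have h6 : 2*αmin*(L*R*r) ≤ L^2*R^2 + αmin^2*r^2 := by nlinarith [sq_nonneg (L*R - αmin*r)]
    have h7 : αmin ≤ α i := hαmin.2 ⟨i, rfl⟩
    have h8 : αmin^2*r^2 ≤ αmin*(α i)*r^2 := by
      nlinarith [mul_nonneg hαmin0.le (sq_nonneg r), h7]
    have h10 : Pay i (Function.update (s (k+1)) i x)
        ≤ Pay i (s (k+1)) + L*R*r - α i/2 * r^2 := by linarith [hsc, hfoc, hsplit, h5]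
    have h12 : (L*R*r - α i/2*r^2) * (2*αmin) ≤ L^2*Q := by nlinarith [h6, h8, hR2]
    have h11 : L*R*r - α i/2*r^2 ≤ L^2*Q/(2*αmin) := by
      rw [le_div_iff₀ (show (0:ℝ) < 2*αmin by linarith)]
      exact h12
    linarith
  intro K hK
  have hKpos : (0:ℝ) < (K:ℝ) := by exact_mod_cast hK
  have hsum : ∑ k ∈ Finset.range K, (P (s (k+1)) - P (s k)) = P (s K) - P (s 0) :=
    Finset.sum_range_sub (fun k => P (s k)) K
  have hPK : P (s K) ≤ Pstar := hPstar.2 ⟨s K, hfeas K, rfl⟩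
  have hex : ∃ k ∈ Finset.range K, P (s (k+1)) - P (s k) ≤ (Pstar - P (s 0)) / K := by
    by_contra hcon
    push_neg at hcon
    have h1 : ∑ k ∈ Finset.range K, ((Pstar - P (s 0)) / K)
        < ∑ k ∈ Finset.range K, (P (s (k+1)) - P (s k)) :=
      Finset.sum_lt_sum_of_nonempty (Finset.nonempty_range_iff.2 (by omega))
        (fun k hk => hcon k hk)
    rw [Finset.sum_const, Finset.card_range, nsmul_eq_mul, hsum] at h1
    have h2 : (K:ℝ) * ((Pstar - P (s 0)) / K) = Pstar - P (s 0) := by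
      field_simp
    rw [h2] at h1
    linarith
  obtain ⟨k, hkK, hDk⟩ := hex
  rw [Finset.mem_range] at hkK
  refine ⟨k+1, by omega, by omega, ?_⟩
  intro i x hx
  have hg := hgap k i x hx
  have hq := hD k
  set Q : ℝ := ∑ j, ‖s (k+1) j - s k j‖^2 with hQ
  have hQ0 : (0:ℝ) ≤ Q := Finset.sum_nonneg (fun j _ => sq_nonneg _)
  have hDc : (P (s (k+1)) - P (s k)) * K ≤ Pstar - P (s 0) := by
    rw [← le_div_iff₀ hKpos]; exact hDk
  have hsuff : L^2 * Q / (2*αmin) ≤ L^2 * (Pstar - P (s 0)) / (δ * αmin * K) := by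
    rw [div_le_div_iff₀ (by positivity) (by positivity)]
    have h9a : δ*Q*(K:ℝ) ≤ 2*(P (s (k+1)) - P (s k))*(K:ℝ) := by
      have := mul_le_mul_of_nonneg_right
        (show δ*Q ≤ 2*(P (s (k+1)) - P (s k)) by linarith) hKpos.le
      linarith
    have h9 : δ * Q * (K:ℝ) ≤ 2 * (Pstar - P (s 0)) := by linarith
    have h13 := mul_le_mul_of_nonneg_left h9
      (show (0:ℝ) ≤ L^2*αmin by positivity)
    nlinarith [h13]
  linarith
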